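/- Let m ≥ 2, n ≥ 1, let α ≤ 0 be an integer, and let β = 2^{−α}·(E(m,n) − 1)/3 (which is an integer, since E(m,n) ≡ 1 mod 3 for m ≥ 2 and 2^{−α} ∈ ℤ). Then |s_1^α s_0^β|_G ≥ (E(m−1,n) − 1)/4. -/

import Mathlib

/-- Iterated exponential: `E 0 n = n`, `E (m+1) n = 2 ^ E m n`. -/
def E : ℕ → ℕ → ℕ
  | 0, n => n
  | m + 1, n => 2 ^ E m n

/-- `Preceq f g` iff there is `C > 0` with `f n ≤ C * g (C*n + C) + C*n + C` for all `n`. -/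
def Preceq (f g : ℕ → ℕ) : Prop :=
  ∃ C : ℕ, 0 < C ∧ ∀ n : ℕ, f n ≤ C * g (C * n + C) + C * n + C

/-- Defining relations of the Baumslag–Gersten group in the presentation
`⟨s₀, s₁, t ∣ s₁ s₀ s₁⁻¹ = s₀², t s₀ t⁻¹ = s₁⟩`, with generator indices
`0 ↦ s₀`, `1 ↦ s₁`, `2 ↦ t`. -/
def bgRels : Set (FreeGroup (Fin 3)) :=
  { FreeGroup.of 1 * FreeGroup.of 0 * (FreeGroup.of 1)⁻¹ * (FreeGroup.of 0 ^ 2)⁻¹,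
    FreeGroup.of 2 * FreeGroup.of 0 * (FreeGroup.of 2)⁻¹ * (FreeGroup.of 1)⁻¹ }

/-- The Baumslag–Gersten group. -/
abbrev BG := PresentedGroup bgRels

/-- The generators of `BG`: `bg 0 = s₀`, `bg 1 = s₁`, `bg 2 = t`. -/
def bg (i : Fin 3) : BG := PresentedGroup.of i

/-- The element of `BG` represented by a word on the generators and their inverses. -/
def evalWordG (w : List (Fin 3 × Bool)) : BG :=
  (w.map (fun p => if p.2 then bg p.1 else (bg p.1)⁻¹)).prod

/-- Word length in `BG` with respect to the generators `s₀, s₁, t`. -/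
noncomputable def wlG (g : BG) : ℕ :=
  sInf { n | ∃ w : List (Fin 3 × Bool), w.length = n ∧ evalWordG w = g }

/-- The minimal word length of a conjugator taking `u` to `v` in `BG`. -/
noncomputable def cLenG (u v : BG) : ℕ :=
  sInf { n | ∃ γ : BG, γ * u * γ⁻¹ = v ∧ wlG γ = n }

/-- The conjugator length function of the Baumslag–Gersten group. -/
noncomputable def CLG (n : ℕ) : ℕ :=
  sSup { c | ∃ u v : List (Fin 3 × Bool),
    u.length + v.length ≤ n ∧
    (∃ γ : BG, γ * evalWordG u * γ⁻¹ = evalWordG v) ∧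
    c = cLenG (evalWordG u) (evalWordG v) }



open Finsupp

/-- value of a digit assignment -/
def dval (d : ℕ →₀ ℤ) : ℤ := d.sum fun e c => c * 2 ^ e

/-- weight of a digit assignment -/
def wgt (d : ℕ →₀ ℤ) : ℕ := d.sum fun _ c => c.natAbs

lemma dval_add (d₁ d₂ : ℕ →₀ ℤ) : dval (d₁ + d₂) = dval d₁ + dval d₂ :=
  Finsupp.sum_add_index' (by simp) (by intros; ring)

lemma dval_single (e : ℕ) (c : ℤ) : dval (single e c) = c * 2 ^ e := by
  simp [dval, Finsupp.sum_single_index]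

lemma wgt_eq_sum {d : ℕ →₀ ℤ} {s : Finset ℕ} (h : d.support ⊆ s) :
    wgt d = ∑ e ∈ s, (d e).natAbs := by
  rw [wgt, Finsupp.sum_of_support_subset d h _ (by simp)]

lemma wgt_add_le (d₁ d₂ : ℕ →₀ ℤ) : wgt (d₁ + d₂) ≤ wgt d₁ + wgt d₂ := by
  rw [wgt_eq_sum (s := d₁.support ∪ d₂.support) (Finsupp.support_add),
    wgt_eq_sum (s := d₁.support ∪ d₂.support) Finset.subset_union_left,
    wgt_eq_sum (s := d₁.support ∪ d₂.support) Finset.subset_union_right,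
    ← Finset.sum_add_distrib]
  exact Finset.sum_le_sum fun e _ => by simp [Int.natAbs_add_le]

lemma wgt_neg (d : ℕ →₀ ℤ) : wgt (-d) = wgt d := by
  simp [wgt, Finsupp.sum, Finsupp.support_neg]

lemma dval_neg (d : ℕ →₀ ℤ) : dval (-d) = - dval d := by
  simp [dval, Finsupp.sum, Finsupp.support_neg, ← Finset.sum_neg_distrib]

/-- shift all exponents up by `k` -/
noncomputable def dshift (k : ℕ) (d : ℕ →₀ ℤ) : ℕ →₀ ℤ := d.mapDomain (· + k)

lemma dval_dshift (k : ℕ) (d : ℕ →₀ ℤ) : dval (dshift k d) = 2 ^ k * dval d := by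
  rw [dval, dshift, Finsupp.sum_mapDomain_index_inj (add_left_injective k)]
  rw [dval, Finsupp.mul_sum]
  exact Finset.sum_congr rfl fun e _ => by ring

lemma wgt_dshift (k : ℕ) (d : ℕ →₀ ℤ) : wgt (dshift k d) = wgt d := by
  rw [wgt, dshift, Finsupp.sum_mapDomain_index_inj (add_left_injective k)]; rfl

/-- `SRep x j d` : `d` is a digit representation of `x * 2^j`. -/
def SRep (x : ℚ) (j : ℕ) (d : ℕ →₀ ℤ) : Prop := (dval d : ℚ) = x * 2 ^ j

/-- the signed-binary weight of a rational -/
noncomputable def sig (x : ℚ) : ℕ∞ :=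
  ⨅ r : {p : ℕ × (ℕ →₀ ℤ) // SRep x p.1 p.2}, (wgt r.1.2 : ℕ∞)

lemma sig_le {x : ℚ} {j : ℕ} {d : ℕ →₀ ℤ} (h : SRep x j d) : sig x ≤ wgt d :=
  iInf_le (f := fun r : {p : ℕ × (ℕ →₀ ℤ) // SRep x p.1 p.2} => (wgt r.1.2 : ℕ∞)) ⟨(j, d), h⟩

lemma exists_of_sig_le {x : ℚ} {n : ℕ} (h : sig x ≤ n) :
    ∃ j d, SRep x j d ∧ wgt d ≤ n := by
  have h2 : sig x < (n + 1 : ℕ) := lt_of_le_of_lt h (by exact_mod_cast Nat.lt_succ_self n)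
  rw [sig, iInf_lt_iff] at h2
  obtain ⟨⟨⟨j, d⟩, hr⟩, hlt⟩ := h2
  exact ⟨j, d, hr, by exact_mod_cast Nat.lt_succ_iff.mp (by exact_mod_cast hlt)⟩

lemma sig_zero : sig 0 = 0 := by
  refine le_antisymm ?_ zero_le
  have h := sig_le (x := 0) (j := 0) (d := 0) (by simp [SRep, dval])
  simpa [wgt] using h

lemma sig_add_le (x y : ℚ) : sig (x + y) ≤ sig x + sig y := by
  rcases eq_top_or_lt_top (sig x) with hx | hx
  · simp [hx]
  rcases eq_top_or_lt_top (sig y) with hy | hy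
  · simp [hy]
  lift sig x to ℕ using hx.ne with nx hnx
  lift sig y to ℕ using hy.ne with ny hny
  obtain ⟨j₁, d₁, hr₁, hw₁⟩ := exists_of_sig_le (x := x) (n := nx) hnx.ge
  obtain ⟨j₂, d₂, hr₂, hw₂⟩ := exists_of_sig_le (x := y) (n := ny) hny.ge
  have hrep : SRep (x + y) (j₁ + j₂) (dshift j₂ d₁ + dshift j₁ d₂) := by
    unfold SRep at *
    push_cast [dval_add, dval_dshift, hr₁, hr₂]
    ring
  calc sig (x + y) ≤ _ := sig_le hrep
    _ ≤ ((wgt (dshift j₂ d₁) + wgt (dshift j₁ d₂) : ℕ) : ℕ∞) := by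
        exact_mod_cast wgt_add_le _ _
    _ ≤ _ := by
        rw [wgt_dshift, wgt_dshift]
        exact_mod_cast add_le_add hw₁ hw₂

lemma sig_neg (x : ℚ) : sig (-x) = sig x := by
  have key : ∀ y : ℚ, sig (-y) ≤ sig y := by
    intro y
    rcases eq_top_or_lt_top (sig y) with hy | hy
    · simp [hy]
    lift sig y to ℕ using hy.ne with ny hny
    obtain ⟨j, d, hr, hw⟩ := exists_of_sig_le (x := y) (n := ny) hny.ge
    have : SRep (-y) j (-d) := by unfold SRep at *; push_cast [dval_neg]; rw [hr]; ring
    calc sig (-y) ≤ _ := sig_le this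
      _ ≤ _ := by rw [wgt_neg]; exact_mod_cast hw
  refine le_antisymm (key x) ?_
  simpa using key (-x)

lemma sig_int_le (k : ℤ) : sig (k : ℚ) ≤ (k.natAbs : ℕ∞) := by
  have : SRep (k : ℚ) 0 (single 0 k) := by simp [SRep, dval_single]
  calc sig (k : ℚ) ≤ _ := sig_le this
    _ ≤ _ := by simp [wgt, Finsupp.sum_single_index]

lemma sig_zpow_mul (z : ℤ) (x : ℚ) : sig (2 ^ z * x) = sig x := by
  have key : ∀ (k : ℕ) (y : ℚ), sig (2 ^ k * y) ≤ sig y := by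
    intro k y
    rcases eq_top_or_lt_top (sig y) with hy | hy
    · simp [hy]
    lift sig y to ℕ using hy.ne with ny hny
    obtain ⟨j, d, hr, hw⟩ := exists_of_sig_le (x := y) (n := ny) hny.ge
    have : SRep (2 ^ k * y) j (dshift k d) := by
      unfold SRep at *; push_cast [dval_dshift]; rw [hr]; ring
    calc sig (2 ^ k * y) ≤ _ := sig_le this
      _ ≤ _ := by rw [wgt_dshift]; exact_mod_cast hw
  have key2 : ∀ (k : ℕ) (y : ℚ), sig (y / 2 ^ k) ≤ sig y := by
    intro k y
    rcases eq_top_or_lt_top (sig y) with hy | hy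
    · simp [hy]
    lift sig y to ℕ using hy.ne with ny hny
    obtain ⟨j, d, hr, hw⟩ := exists_of_sig_le (x := y) (n := ny) hny.ge
    have : SRep (y / 2 ^ k) (j + k) d := by
      unfold SRep at *; rw [hr]; field_simp; ring
    calc sig (y / 2 ^ k) ≤ _ := sig_le this
      _ ≤ _ := by exact_mod_cast hw
  rcases le_or_gt 0 z with hz | hz
  · have h2 : (2 : ℚ) ^ z = 2 ^ z.toNat := by
      rw [← zpow_natCast]; congr 1; omega
    refine le_antisymm (h2 ▸ key _ _) ?_
    have := key2 z.toNat (2 ^ z * x)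
    rw [h2] at this ⊢
    have h3 : (2:ℚ) ^ z.toNat * x / 2 ^ z.toNat = x := by
      field_simp
    rwa [h3] at this
  · have h2 : (2 : ℚ) ^ z = 1 / 2 ^ (-z).toNat := by
      rw [← zpow_natCast]
      rw [show (((-z).toNat : ℤ)) = -z by omega]
      simp [zpow_neg]
    rw [h2]
    refine le_antisymm ?_ ?_
    · have := key2 (-z).toNat x
      have h3 : 1 / (2:ℚ) ^ (-z).toNat * x = x / 2 ^ (-z).toNat := by ring
      rwa [h3]
    · have := key (-z).toNat (1 / 2 ^ (-z).toNat * x)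
      have h3 : (2:ℚ) ^ (-z).toNat * (1 / 2 ^ (-z).toNat * x) = x := by
        field_simp
      rwa [h3] at this

/-! ### Normalization: minimal-style representations with digits in {-1,0,1} -/

lemma sig_eq_zero {x : ℚ} (h : sig x ≤ 0) : x = 0 := by
  obtain ⟨j, d, hr, hw⟩ := exists_of_sig_le (n := 0) (by simpa using h)
  have hd : d = 0 := by
    ext e
    by_contra he
    have hes : e ∈ d.support := Finsupp.mem_support_iff.mpr he
    have h1 : (d e).natAbs ≤ wgt d := by
      rw [wgt_eq_sum (le_refl d.support)]
      exact Finset.single_le_sum (f := fun e => (d e).natAbs) (fun i _ => Nat.zero_le _) hes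
    have h2 : (d e).natAbs ≠ 0 := fun hh => he (Int.natAbs_eq_zero.mp hh)
    omega
  rw [SRep, hd] at hr
  simp only [dval, Finsupp.sum_zero_index, Int.cast_zero] at hr
  rcases mul_eq_zero.mp hr.symm with h | h
  · exact h
  · exact absurd h (by positivity)

lemma dnorm_aux : ∀ (n : ℕ) (d : ℕ →₀ ℤ), wgt d ≤ n →
    ∃ d', dval d' = dval d ∧ wgt d' ≤ wgt d ∧ ∀ e, (d' e).natAbs ≤ 1 := by
  intro n
  induction n with
  | zero =>
    intro d hd
    exact ⟨d, rfl, le_refl _, fun e => by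
      have h1 : (d e).natAbs ≤ wgt d := by
        by_cases he : d e = 0
        · simp [he]
        · rw [wgt_eq_sum (le_refl d.support)]
          exact Finset.single_le_sum (f := fun e => (d e).natAbs) (fun i _ => Nat.zero_le _)
            (Finsupp.mem_support_iff.mpr he)
      omega⟩
  | succ n ih =>
    intro d hd
    by_cases hgood : ∀ e, (d e).natAbs ≤ 1
    · exact ⟨d, rfl, le_refl _, hgood⟩
    push_neg at hgood
    obtain ⟨e, he⟩ := hgood
    set ε : ℤ := if 0 < d e then 1 else -1 with hε
    set d₂ : ℕ →₀ ℤ := d + single (e+1) ε - single e (2*ε) with hd₂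
    have happ : ∀ x, d₂ x = d x + (single (e+1) ε) x - (single e (2*ε)) x := by
      intro x; simp [hd₂]
    have happ_e : d₂ e = d e - 2*ε := by
      rw [happ]; rw [Finsupp.single_apply, Finsupp.single_apply]
      simp [(by omega : ¬ e + 1 = e)]
    have happ_e1 : d₂ (e+1) = d (e+1) + ε := by
      rw [happ]; rw [Finsupp.single_apply, Finsupp.single_apply]
      simp [(by omega : ¬ e = e + 1)]
    have happ_other : ∀ x, x ≠ e → x ≠ e + 1 → d₂ x = d x := by
      intro x h1 h2
      rw [happ, Finsupp.single_apply, Finsupp.single_apply, if_neg (by omega), if_neg (by omega)]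
      ring
    have hval : dval d₂ = dval d := by
      rw [hd₂, sub_eq_add_neg, dval_add, dval_add, dval_neg, dval_single, dval_single]
      ring
    -- weight decreases
    have hsub : d₂.support ⊆ d.support ∪ {e, e+1} := by
      intro x hx
      rcases eq_or_ne x e with rfl | h1
      · simp
      rcases eq_or_ne x (e+1) with rfl | h2
      · simp
      rw [Finsupp.mem_support_iff, happ_other x h1 h2] at hx
      simp [Finsupp.mem_support_iff.mpr hx]
    set s : Finset ℕ := d.support ∪ {e, e+1} with hs
    have hes : e ∈ s := by simp [hs]
    have he1s : e + 1 ∈ s.erase e := Finset.mem_erase.mpr ⟨by omega, by simp [hs]⟩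
    have hwgt2 : wgt d₂ + 1 ≤ wgt d := by
      rw [wgt_eq_sum (s := s) hsub, wgt_eq_sum (s := s) Finset.subset_union_left]
      rw [← Finset.sum_erase_add s _ hes, ← Finset.sum_erase_add s _ hes,
        ← Finset.sum_erase_add (s.erase e) _ he1s, ← Finset.sum_erase_add (s.erase e) _ he1s]
      have heq : ∀ x ∈ (s.erase e).erase (e+1), (d₂ x).natAbs = (d x).natAbs := by
        intro x hx
        simp only [Finset.mem_erase] at hx
        rw [happ_other x hx.2.1 hx.1]
      rw [Finset.sum_congr rfl heq]
      have h1 : (d₂ e).natAbs + 2 = (d e).natAbs := by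
        rw [happ_e, hε]
        split_ifs with hde <;> omega
      have h2 : (d₂ (e+1)).natAbs ≤ (d (e+1)).natAbs + 1 := by
        rw [happ_e1, hε]
        split_ifs with hde <;> omega
      omega
    obtain ⟨d', h1, h2, h3⟩ := ih d₂ (by omega)
    exact ⟨d', h1.trans hval, by omega, h3⟩

lemma exists_norm_rep {x : ℚ} {n : ℕ} (h : sig x ≤ n) :
    ∃ j d, SRep x j d ∧ wgt d ≤ n ∧ ∀ e, (d e).natAbs ≤ 1 := by
  obtain ⟨j, d, hr, hw⟩ := exists_of_sig_le h
  obtain ⟨d', h1, h2, h3⟩ := dnorm_aux (wgt d) d le_rfl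
  exact ⟨j, d', by rw [SRep, h1]; exact hr, by omega, h3⟩

/-! ### weight splits across filters -/

lemma support_filter_subset (p : ℕ → Prop) [DecidablePred p] (d : ℕ →₀ ℤ) :
    (d.filter p).support ⊆ d.support := by
  rw [Finsupp.support_filter]; exact Finset.filter_subset _ _

lemma wgt_filter_add (p : ℕ → Prop) [DecidablePred p] (d : ℕ →₀ ℤ) :
    wgt (d.filter p) + wgt (d.filter fun e => ¬ p e) = wgt d := by
  rw [wgt_eq_sum (s := d.support) (support_filter_subset _ _),
    wgt_eq_sum (s := d.support) (support_filter_subset _ _),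
    wgt_eq_sum (le_refl d.support), ← Finset.sum_add_distrib]
  refine Finset.sum_congr rfl fun e _ => ?_
  rw [Finsupp.filter_apply, Finsupp.filter_apply]
  split_ifs <;> simp_all

lemma dval_filter_add (p : ℕ → Prop) [DecidablePred p] (d : ℕ →₀ ℤ) :
    dval (d.filter p) + dval (d.filter fun e => ¬ p e) = dval d := by
  rw [← dval_add, Finsupp.filter_pos_add_filter_neg]

lemma geom2 (j : ℕ) : (∑ e ∈ Finset.range j, (2:ℤ)^e) = 2^j - 1 := by
  induction j with
  | zero => simp
  | succ j ih => rw [Finset.sum_range_succ, ih, pow_succ]; ring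

lemma wgt_single (e : ℕ) (c : ℤ) : wgt (single e c) = c.natAbs := by
  simp [wgt, Finsupp.sum_single_index]

/-- Key splitting lemma: taking integer and fractional parts costs at most 2. -/
lemma sig_floor_add_sig_fract (x : ℚ) :
    sig ((⌊x⌋ : ℤ) : ℚ) + sig (Int.fract x) ≤ sig x + 2 := by
  classical
  rcases eq_top_or_lt_top (sig x) with hx | hx
  · simp [hx]
  lift sig x to ℕ using hx.ne with n hn
  obtain ⟨j, d, hr, hw, hnorm⟩ := exists_norm_rep (x := x) (n := n) hn.ge
  set dI := d.filter (fun e => j ≤ e) with hdI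
  set dF := d.filter (fun e => ¬ j ≤ e) with hdF
  have hsplitv : dval dI + dval dF = dval d := dval_filter_add _ d
  have hsplitw : wgt dI + wgt dF = wgt d := wgt_filter_add _ d
  -- dI is divisible by 2^j
  have hdvd : (2:ℤ)^j ∣ dval dI := by
    rw [dval, Finsupp.sum]
    refine Finset.dvd_sum fun e he => ?_
    have hje : j ≤ e := by
      have := Finsupp.mem_support_iff.mp he
      rw [hdI, Finsupp.filter_apply] at this
      by_contra hc
      simp [hc] at this
    exact Dvd.dvd.mul_left (pow_dvd_pow 2 hje) _
  obtain ⟨I, hI⟩ := hdvd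
  set F : ℤ := dval dF with hF
  -- |F| ≤ 2^j - 1
  have hFb : |F| ≤ 2^j - 1 := by
    rw [hF, dval, Finsupp.sum]
    calc |∑ e ∈ dF.support, dF e * 2 ^ e| ≤ ∑ e ∈ dF.support, |dF e * 2 ^ e| :=
          Finset.abs_sum_le_sum_abs _ _
      _ ≤ ∑ e ∈ dF.support, 2 ^ e := by
          refine Finset.sum_le_sum fun e _ => ?_
          rw [abs_mul, abs_pow, abs_two]
          have h2' : (dF e).natAbs ≤ (d e).natAbs := by
            rw [hdF, Finsupp.filter_apply]
            split_ifs <;> simp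
          have h3 := hnorm e
          have h1 : |dF e| ≤ 1 := abs_le.mpr ⟨by omega, by omega⟩
          nlinarith [pow_nonneg (by norm_num : (0:ℤ) ≤ 2) e]
      _ ≤ ∑ e ∈ Finset.range j, 2 ^ e := by
          refine Finset.sum_le_sum_of_subset_of_nonneg ?_ (fun e _ _ => by positivity)
          intro e he
          have := Finsupp.mem_support_iff.mp he
          rw [hdF, Finsupp.filter_apply] at this
          rw [Finset.mem_range]
          by_contra hc
          simp [Nat.le_of_not_lt hc] at this
      _ = 2^j - 1 := geom2 j
  have h2jQ : (0:ℚ) < (2:ℚ)^j := by positivity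
  have hxeq : x = (I : ℚ) + (F : ℚ) / 2^j := by
    have h0 : ((dval d : ℤ) : ℚ) = x * 2^j := hr
    rw [← hsplitv, hI] at h0
    push_cast at h0
    field_simp
    linarith
  set δ : ℤ := ⌊(F:ℚ)/2^j⌋ with hδ
  have hFb1 : -((2:ℚ)^j - 1) ≤ (F:ℚ) := by
    have h5 := (abs_le.mp hFb).1
    have : ((-(2^j - 1) : ℤ) : ℚ) ≤ ((F : ℤ) : ℚ) := by exact_mod_cast h5
    push_cast at this
    linarith
  have hFb2 : (F:ℚ) ≤ (2:ℚ)^j - 1 := by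
    have h5 := (abs_le.mp hFb).2
    have : ((F : ℤ) : ℚ) ≤ ((2^j - 1 : ℤ) : ℚ) := by exact_mod_cast h5
    push_cast at this
    linarith
  have hδ0 : -1 ≤ δ := by
    rw [hδ, Int.le_floor]
    rw [le_div_iff₀ h2jQ]
    push_cast
    linarith
  have hδ1 : δ ≤ 0 := by
    have : δ < 1 := by
      rw [hδ, Int.floor_lt]
      rw [div_lt_iff₀ h2jQ]
      push_cast
      linarith
    omega
  have hfloor : ⌊x⌋ = I + δ := by rw [hxeq, Int.floor_intCast_add]
  have hfract : Int.fract x = (F:ℚ)/2^j - (δ:ℚ) := by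
    rw [Int.fract, hfloor, hxeq]
    push_cast
    ring
  -- representation of the floor
  have hrfloor : SRep ((⌊x⌋ : ℤ) : ℚ) j (dI + single j δ) := by
    rw [SRep, dval_add, dval_single, hI, hfloor]
    push_cast
    ring
  have hrfract : SRep (Int.fract x) j (dF + single j (-δ)) := by
    rw [SRep, dval_add, dval_single, hfract]
    push_cast
    rw [← hF]
    field_simp
    ring
  have hδa : δ.natAbs ≤ 1 := by omega
  have hb1 : sig ((⌊x⌋ : ℤ) : ℚ) ≤ (wgt dI + 1 : ℕ) := by
    refine (sig_le hrfloor).trans ?_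
    have h9 := wgt_add_le dI (single j δ)
    rw [wgt_single] at h9
    have h10 : wgt (dI + single j δ) ≤ wgt dI + 1 := by omega
    exact_mod_cast h10
  have hb2 : sig (Int.fract x) ≤ (wgt dF + 1 : ℕ) := by
    refine (sig_le hrfract).trans ?_
    have h9 := wgt_add_le dF (single j (-δ))
    rw [wgt_single] at h9
    have h10 : wgt (dF + single j (-δ)) ≤ wgt dF + 1 := by omega
    exact_mod_cast h10
  calc sig ((⌊x⌋ : ℤ) : ℚ) + sig (Int.fract x) ≤ ((wgt dI + 1 : ℕ) : ℕ∞) + ((wgt dF + 1 : ℕ) : ℕ∞) :=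
        add_le_add hb1 hb2
    _ ≤ ((n + 2 : ℕ) : ℕ∞) := by
        have : wgt dI + 1 + (wgt dF + 1) ≤ n + 2 := by omega
        exact_mod_cast this
    _ = (n : ℕ∞) + 2 := by push_cast; rfl

/-- Odd step: removing the unit digit of an odd integer. -/
lemma sig_odd_step {x : ℤ} (hodd : Odd x) {N : ℕ} (h : sig (x:ℚ) ≤ N) :
    ∃ ε : ℤ, (ε = 1 ∨ ε = -1) ∧ 1 ≤ N ∧ sig ((x - ε : ℤ) : ℚ) ≤ ((N - 1 : ℕ) : ℕ∞) := by
  classical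
  obtain ⟨j, d, hr, hw, hnorm⟩ := exists_norm_rep h
  have hdval : dval d = x * 2^j := by
    have hr' := hr
    rw [SRep] at hr'
    have h0 : ((dval d : ℤ) : ℚ) = ((x * 2 ^ j : ℤ) : ℚ) := by push_cast; exact_mod_cast hr'
    exact_mod_cast h0
  -- all exponents in the support are ≥ j
  have hsupp : ∀ e ∈ d.support, j ≤ e := by
    by_contra hc
    push_neg at hc
    have hne : (d.support.filter (· < j)).Nonempty := by
      obtain ⟨e, he, hej⟩ := hc
      exact ⟨e, Finset.mem_filter.mpr ⟨he, by omega⟩⟩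
    set e₀ := (d.support.filter (· < j)).min' hne with he₀
    have he₀mem := Finset.min'_mem _ hne
    rw [← he₀] at he₀mem
    have he₀s : e₀ ∈ d.support := (Finset.mem_filter.mp he₀mem).1
    have he₀j : e₀ < j := by simpa using (Finset.mem_filter.mp he₀mem).2
    have hmin : ∀ e ∈ d.support, e < j → e₀ ≤ e := fun e he hej =>
      Finset.min'_le _ _ (Finset.mem_filter.mpr ⟨he, by omega⟩)
    -- 2^(e₀+1) divides everything except the e₀ term
    have hdvd1 : (2:ℤ)^(e₀+1) ∣ dval d - d e₀ * 2^e₀ := by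
      rw [dval, Finsupp.sum, ← Finset.sum_erase_add _ _ he₀s, add_sub_cancel_right]
      refine Finset.dvd_sum fun e he => ?_
      have h1 : e ∈ d.support := Finset.mem_of_mem_erase he
      have h2 : e ≠ e₀ := Finset.ne_of_mem_erase he
      have h3 : e₀ + 1 ≤ e := by
        rcases lt_or_ge e j with h4 | h4
        · have := hmin e h1 h4; omega
        · omega
      exact Dvd.dvd.mul_left (pow_dvd_pow 2 h3) _
    have hdvd2 : (2:ℤ)^(e₀+1) ∣ dval d := by
      rw [hdval]
      exact Dvd.dvd.mul_left (pow_dvd_pow 2 (by omega)) _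
    have hdvd3 : (2:ℤ)^(e₀+1) ∣ d e₀ * 2^e₀ := (dvd_sub_right hdvd2).mp hdvd1
    have : (2:ℤ) ∣ d e₀ := by
      rw [pow_succ] at hdvd3
      obtain ⟨c, hc2⟩ := hdvd3
      refine ⟨c, ?_⟩
      have h2e : (2:ℤ)^e₀ ≠ 0 := by positivity
      have : d e₀ * 2^e₀ = 2 * c * 2^e₀ := by rw [hc2]; ring
      exact mul_right_cancel₀ h2e this
    have h5 := hnorm e₀
    have h6 := Finsupp.mem_support_iff.mp he₀s
    omega
  -- d j is odd
  have hdj : d j = 1 ∨ d j = -1 := by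
    have hdvd1 : (2:ℤ)^(j+1) ∣ dval d - d j * 2^j := by
      by_cases hjs : j ∈ d.support
      · rw [dval, Finsupp.sum, ← Finset.sum_erase_add _ _ hjs, add_sub_cancel_right]
        refine Finset.dvd_sum fun e he => ?_
        have h1 := hsupp e (Finset.mem_of_mem_erase he)
        have h2 : e ≠ j := Finset.ne_of_mem_erase he
        exact Dvd.dvd.mul_left (pow_dvd_pow 2 (by omega)) _
      · have h0 : d j = 0 := Finsupp.notMem_support_iff.mp hjs
        rw [h0]
        simp only [zero_mul, sub_zero, dval, Finsupp.sum]
        refine Finset.dvd_sum fun e he => ?_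
        have h1 := hsupp e he
        have h2 : e ≠ j := fun hh => hjs (hh ▸ he)
        exact Dvd.dvd.mul_left (pow_dvd_pow 2 (by omega)) _
    -- x * 2^j - d j * 2^j divisible by 2^(j+1) : so x - d j even
    have hdvd2 : (2:ℤ)^(j+1) ∣ (x - d j) * 2^j := by
      have : (x - d j) * 2^j = dval d - d j * 2^j := by rw [hdval]; ring
      rw [this]; exact hdvd1
    have heven : (2:ℤ) ∣ x - d j := by
      obtain ⟨c, hc2⟩ := hdvd2
      refine ⟨c, ?_⟩
      have h2e : (2:ℤ)^j ≠ 0 := by positivity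
      rw [pow_succ] at hc2
      have : (x - d j) * 2^j = 2 * c * 2^j := by linarith [hc2]
      exact mul_right_cancel₀ h2e this
    obtain ⟨y, hy⟩ := hodd
    have h5 := hnorm j
    omega
  refine ⟨d j, hdj, ?_, ?_⟩
  · -- N ≥ 1 since wgt d ≥ 1
    have h1 : (d j).natAbs ≤ wgt d := by
      rw [wgt_eq_sum (le_refl d.support)]
      exact Finset.single_le_sum (f := fun e => (d e).natAbs) (fun i _ => Nat.zero_le _)
        (Finsupp.mem_support_iff.mpr (by omega))
    omega
  · -- removing the digit at j
    have hrep : SRep ((x - d j : ℤ) : ℚ) j (d + single j (-(d j))) := by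
      rw [SRep, dval_add, dval_single, hdval]
      push_cast
      ring
    have h9 := wgt_add_le d (single j (-(d j)))
    rw [wgt_single] at h9
    -- sharper: wgt (d + single j (-(d j))) = wgt d - 1
    have hwe : wgt (d + single j (-(d j))) + 1 ≤ wgt d := by
      have hjs : j ∈ d.support := Finsupp.mem_support_iff.mpr (by omega)
      have hsub : (d + single j (-(d j))).support ⊆ d.support := by
        intro e he
        have h1 := Finsupp.mem_support_iff.mp he
        rw [Finsupp.add_apply, Finsupp.single_apply] at h1
        by_contra h2
        have h3 : d e = 0 := Finsupp.notMem_support_iff.mp h2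
        split_ifs at h1 with hje
        · have h4 : d j = 0 := by rw [hje]; exact h3
          omega
        · omega
      rw [wgt_eq_sum (s := d.support) hsub, wgt_eq_sum (le_refl d.support),
        ← Finset.sum_erase_add _ _ hjs, ← Finset.sum_erase_add _ _ hjs]
      have heq : ∀ e ∈ d.support.erase j, ((d + single j (-(d j))) e).natAbs = (d e).natAbs := by
        intro e he
        have h2 : e ≠ j := Finset.ne_of_mem_erase he
        rw [Finsupp.add_apply, Finsupp.single_apply, if_neg (fun hh => h2 hh.symm)]
        simp
      rw [Finset.sum_congr rfl heq]
      have h3 : ((d + single j (-(d j))) j).natAbs = 0 := by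
        simp [Finsupp.add_apply, Finsupp.single_apply]
      omega
    refine (sig_le hrep).trans ?_
    have : wgt (d + single j (-(d j))) ≤ N - 1 := by omega
    exact_mod_cast this

/-- The sequence `M j = (4^j - 1)/3`. -/
def Mseq : ℕ → ℤ
  | 0 => 0
  | j + 1 => 4 * Mseq j + 1

lemma sig_nat_mul (k : ℕ) (x : ℚ) : sig ((2^k : ℤ) * x) = sig x := by
  have := sig_zpow_mul (k : ℤ) x
  rw [zpow_natCast] at this
  rw [← this]
  norm_cast

/-- Lower bound: `sig (M j) ≥ j` and `sig (2 * M j + 1) ≥ j + 1`. -/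
lemma sig_Mseq_lower : ∀ j : ℕ,
    (∀ n : ℕ, sig ((Mseq j : ℚ)) ≤ n → j ≤ n) ∧
    (∀ n : ℕ, sig (((2 * Mseq j + 1 : ℤ) : ℚ)) ≤ n → j + 1 ≤ n) := by
  intro j
  induction j with
  | zero =>
    refine ⟨fun n _ => Nat.zero_le n, fun n h => ?_⟩
    by_contra hc
    have hn : n = 0 := by omega
    subst hn
    have := sig_eq_zero h
    norm_num [Mseq] at this
  | succ j ih =>
    have P : ∀ n : ℕ, sig ((Mseq (j+1) : ℚ)) ≤ n → j + 1 ≤ n := by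
      intro n h
      have hodd : Odd (Mseq (j+1)) := ⟨2 * Mseq j, by simp only [Mseq]; ring⟩
      obtain ⟨ε, hε, hN, hstep⟩ := sig_odd_step hodd h
      rcases hε with rfl | rfl
      · -- M (j+1) - 1 = 4 * M j
        have he : Mseq (j+1) - 1 = (2^2 : ℤ) * Mseq j := by simp only [Mseq]; ring
        rw [he, Int.cast_mul, sig_nat_mul] at hstep
        have := ih.1 _ hstep
        omega
      · -- M (j+1) + 1 = 2 * (2 * M j + 1)
        have he : Mseq (j+1) - (-1) = (2^1 : ℤ) * (2 * Mseq j + 1) := by simp only [Mseq]; ring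
        rw [he, Int.cast_mul, sig_nat_mul] at hstep
        have := ih.2 _ hstep
        omega
    refine ⟨P, ?_⟩
    intro n h
    have hodd : Odd (2 * Mseq (j+1) + 1) := ⟨Mseq (j+1), by ring⟩
    obtain ⟨ε, hε, hN, hstep⟩ := sig_odd_step hodd h
    rcases hε with rfl | rfl
    · -- 2 M(j+1) + 1 - 1 = 2 * M (j+1)
      have he : 2 * Mseq (j+1) + 1 - 1 = (2^1 : ℤ) * Mseq (j+1) := by ring
      rw [he, Int.cast_mul, sig_nat_mul] at hstep
      have := P _ hstep
      omega
    · -- 2 M(j+1) + 1 + 1 = 4 * (2 M j + 1)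
      have he : 2 * Mseq (j+1) + 1 - (-1) = (2^2 : ℤ) * (2 * Mseq j + 1) := by simp only [Mseq]; ring
      rw [he, Int.cast_mul, sig_nat_mul] at hstep
      have := ih.2 _ hstep
      omega

/-! ### Part 2: the base group `Hgrp = ℤ ⋉ ℚ` (affine maps `x ↦ 2^a x + b`) -/

@[ext]
structure Hgrp where
  a : ℤ
  b : ℚ

namespace Hgrp

instance : Group Hgrp where
  mul x y := ⟨x.a + y.a, x.b + 2 ^ x.a * y.b⟩
  one := ⟨0, 0⟩
  inv x := ⟨-x.a, -(2 ^ (-x.a) * x.b)⟩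
  mul_assoc x y z := by
    refine Hgrp.ext (add_assoc _ _ _) ?_
    show (x.b + 2 ^ x.a * y.b) + 2 ^ (x.a + y.a) * z.b = x.b + 2 ^ x.a * (y.b + 2 ^ y.a * z.b)
    rw [zpow_add₀ (by norm_num : (2:ℚ) ≠ 0)]
    ring
  one_mul x := by
    refine Hgrp.ext (zero_add _) ?_
    show (0:ℚ) + 2 ^ (0:ℤ) * x.b = x.b
    simp
  mul_one x := by
    refine Hgrp.ext (add_zero _) ?_
    show x.b + 2 ^ x.a * 0 = x.b
    simp
  inv_mul_cancel x := by
    refine Hgrp.ext (by exact neg_add_cancel x.a) ?_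
    show -(2 ^ (-x.a) * x.b) + 2 ^ (-x.a) * x.b = 0
    ring

lemma mul_def (x y : Hgrp) : x * y = ⟨x.a + y.a, x.b + 2 ^ x.a * y.b⟩ := rfl

lemma one_def : (1 : Hgrp) = ⟨0, 0⟩ := rfl

lemma inv_def (x : Hgrp) : x⁻¹ = ⟨-x.a, -(2 ^ (-x.a) * x.b)⟩ := rfl

@[simp] lemma mul_a (x y : Hgrp) : (x * y).a = x.a + y.a := rfl
@[simp] lemma mul_b (x y : Hgrp) : (x * y).b = x.b + 2 ^ x.a * y.b := rfl
@[simp] lemma one_a : (1 : Hgrp).a = 0 := rfl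
@[simp] lemma one_b : (1 : Hgrp).b = 0 := rfl
@[simp] lemma inv_a (x : Hgrp) : (x⁻¹).a = -x.a := rfl
@[simp] lemma inv_b (x : Hgrp) : (x⁻¹).b = -(2 ^ (-x.a) * x.b) := rfl

/-- the subgroup `⟨s₀⟩` : integer translations -/
def Asub : Subgroup Hgrp where
  carrier := {h | h.a = 0 ∧ ∃ k : ℤ, (k : ℚ) = h.b}
  one_mem' := ⟨rfl, 0, by simp⟩
  mul_mem' := by
    rintro x y ⟨hxa, kx, hx⟩ ⟨hya, ky, hy⟩
    refine ⟨by simp [hxa, hya], kx + ky, ?_⟩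
    show ((kx + ky : ℤ) : ℚ) = x.b + 2 ^ x.a * y.b
    rw [hxa, ← hx, ← hy]
    push_cast
    ring
  inv_mem' := by
    rintro x ⟨hxa, kx, hx⟩
    refine ⟨by simp [hxa], -kx, ?_⟩
    show ((-kx : ℤ) : ℚ) = -(2 ^ (-x.a) * x.b)
    rw [hxa, ← hx]
    push_cast
    ring

/-- the subgroup `⟨s₁⟩` : powers of the scaling map -/
def Bsub : Subgroup Hgrp where
  carrier := {h | h.b = 0}
  one_mem' := rfl
  mul_mem' := by
    rintro x y hx hy
    show x.b + 2 ^ x.a * y.b = 0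
    rw [hx, hy]; ring
  inv_mem' := by
    rintro x hx
    show -(2 ^ (-x.a) * x.b) = 0
    rw [hx]; ring

lemma mem_Asub {h : Hgrp} : h ∈ Asub ↔ h.a = 0 ∧ ∃ k : ℤ, (k : ℚ) = h.b := Iff.rfl
lemma mem_Bsub {h : Hgrp} : h ∈ Bsub ↔ h.b = 0 := Iff.rfl

/-- the isomorphism `s₀^k ↦ s₁^k` -/
def phi : Asub ≃* Bsub where
  toFun x := ⟨⟨x.1.b.num, 0⟩, rfl⟩
  invFun y := ⟨⟨0, (y.1.a : ℚ)⟩, ⟨rfl, ⟨y.1.a, rfl⟩⟩⟩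
  left_inv := by
    rintro ⟨x, hxa, k, hk⟩
    ext
    · exact hxa.symm
    · show ((x.b.num : ℚ)) = x.b
      rw [← hk, Rat.num_intCast]
  right_inv := by
    rintro ⟨y, hy⟩
    ext
    · show ((y.a : ℚ)).num = y.a
      rw [Rat.num_intCast]
    · exact (hy : y.b = 0).symm
  map_mul' := by
    rintro ⟨x, hxa, kx, hkx⟩ ⟨y, hya, ky, hky⟩
    have h1 : (x * y).b = ((kx + ky : ℤ) : ℚ) := by
      show x.b + 2 ^ x.a * y.b = _
      rw [hxa, ← hkx, ← hky]
      push_cast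
      ring
    refine Subtype.ext (Hgrp.ext ?_ ?_)
    · show ((x * y).b).num = (⟨x.b.num, 0⟩ * (⟨y.b.num, 0⟩ : Hgrp)).a
      rw [h1, Rat.num_intCast]
      show kx + ky = x.b.num + y.b.num
      rw [← hkx, ← hky, Rat.num_intCast, Rat.num_intCast]
    · show (0 : ℚ) = 0 + 2 ^ (x.b.num : ℤ) * 0
      ring

end Hgrp

/-! ### Part 4: the transversal -/

namespace Hgrp

open HNNExtension HNNExtension.NormalWord Subgroup

/-- helper: identify `IsComplement.equiv` from an explicit decomposition -/
lemma complement_equiv_eq {G : Type*} [Group G] {S T : Set G}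
    (hST : Subgroup.IsComplement S T) (g : G) (x : S × T) (hx : (x.1 : G) * x.2 = g) :
    hST.equiv g = x := by
  rw [Equiv.apply_eq_iff_eq_symm_apply]
  exact hx.symm.trans (Subgroup.IsComplement.equiv_symm_apply hST x).symm

/-- the transversal pair : for `A`, elements with fractional `b`-part; for `B`,
elements with zero `a`-part. -/
noncomputable def dd : TransversalPair Hgrp Asub Bsub where
  set u := if u = 1 then {h : Hgrp | 0 ≤ h.b ∧ h.b < 1} else {h : Hgrp | h.a = 0}
  compl u := by
    rcases Int.units_eq_one_or u with rfl | rfl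
    · rw [Subgroup.isComplement_iff_existsUnique]
      intro g
      refine ⟨(⟨⟨0, (⌊g.b⌋ : ℚ)⟩, ⟨rfl, ⟨⌊g.b⌋, rfl⟩⟩⟩,
        ⟨⟨g.a, Int.fract g.b⟩, ⟨Int.fract_nonneg _, Int.fract_lt_one _⟩⟩), ?_, ?_⟩
      · show (⟨0, (⌊g.b⌋ : ℚ)⟩ * ⟨g.a, Int.fract g.b⟩ : Hgrp) = g
        refine Hgrp.ext (by simp) ?_
        show (⌊g.b⌋ : ℚ) + 2 ^ (0:ℤ) * Int.fract g.b = g.b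
        rw [zpow_zero, one_mul, Int.floor_add_fract]
      · rintro ⟨⟨s, hsa, k, hk⟩, ⟨r, hr0, hr1⟩⟩ hprod
        have ha : s.a + r.a = g.a := congrArg Hgrp.a hprod
        have hb : s.b + 2 ^ s.a * r.b = g.b := congrArg Hgrp.b hprod
        rw [hsa, zpow_zero, one_mul, ← hk] at hb
        have hfl : ⌊g.b⌋ = k := by
          rw [← hb]
          rw [add_comm, Int.floor_add_intCast]
          rw [Int.floor_eq_zero_iff.mpr ⟨hr0, hr1⟩]
          ring
        refine Prod.ext (Subtype.ext (Hgrp.ext ?_ ?_)) (Subtype.ext (Hgrp.ext ?_ ?_)) <;>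
          simp only
        · exact hsa
        · rw [hfl, hk]
        · omega
        · have : r.b = g.b - (k:ℚ) := by linarith [hb]
          rw [this, Int.fract, hfl]
    · rw [Subgroup.isComplement_iff_existsUnique]
      intro g
      refine ⟨(⟨⟨g.a, 0⟩, rfl⟩, ⟨⟨0, 2 ^ (-g.a) * g.b⟩, rfl⟩), ?_, ?_⟩
      · show (⟨g.a, 0⟩ * ⟨0, 2 ^ (-g.a) * g.b⟩ : Hgrp) = g
        refine Hgrp.ext (by simp) ?_
        show (0:ℚ) + 2 ^ g.a * (2 ^ (-g.a) * g.b) = g.b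
        rw [← mul_assoc, ← zpow_add₀ (by norm_num : (2:ℚ) ≠ 0)]
        simp
      · rintro ⟨⟨s, hs⟩, ⟨r, hr⟩⟩ hprod
        have ha : s.a + r.a = g.a := congrArg Hgrp.a hprod
        have hb : s.b + 2 ^ s.a * r.b = g.b := congrArg Hgrp.b hprod
        rw [show r.a = 0 from hr] at ha
        rw [show s.b = 0 from hs, zero_add] at hb
        rw [add_zero] at ha
        refine Prod.ext (Subtype.ext (Hgrp.ext ?_ ?_)) (Subtype.ext (Hgrp.ext ?_ ?_)) <;>
          simp only
        · exact ha
        · exact hs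
        · exact hr
        · rw [← hb, ← ha]
          rw [← mul_assoc, ← zpow_add₀ (by norm_num : (2:ℚ) ≠ 0)]
          simp

lemma dd_equiv_one (h : Hgrp) :
    (dd.compl 1).equiv h = (⟨⟨0, (⌊h.b⌋ : ℚ)⟩, ⟨rfl, ⟨⌊h.b⌋, rfl⟩⟩⟩,
      ⟨⟨h.a, Int.fract h.b⟩, by
        show (⟨h.a, Int.fract h.b⟩ : Hgrp) ∈ dd.set 1
        simp only [dd, if_pos rfl]
        exact ⟨Int.fract_nonneg _, Int.fract_lt_one _⟩⟩) := by
  refine complement_equiv_eq _ _ _ ?_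
  refine Hgrp.ext (by simp) ?_
  show (⌊h.b⌋ : ℚ) + 2 ^ (0:ℤ) * Int.fract h.b = h.b
  rw [zpow_zero, one_mul, Int.floor_add_fract]

lemma dd_equiv_neg_one (h : Hgrp) :
    (dd.compl (-1)).equiv h = (⟨⟨h.a, 0⟩, rfl⟩,
      ⟨⟨0, 2 ^ (-h.a) * h.b⟩, by
        show (⟨0, 2 ^ (-h.a) * h.b⟩ : Hgrp) ∈ dd.set (-1)
        simp only [dd, if_neg (by decide : ¬ (-1 : ℤˣ) = 1)]
        exact rfl⟩) := by
  refine complement_equiv_eq _ _ _ ?_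
  refine Hgrp.ext (by simp) ?_
  show (0:ℚ) + 2 ^ h.a * (2 ^ (-h.a) * h.b) = h.b
  rw [← mul_assoc, ← zpow_add₀ (by norm_num : (2:ℚ) ≠ 0)]
  simp

end Hgrp

/-! ### Part 5: the potential function on normal words -/

namespace Hgrp

open HNNExtension HNNExtension.NormalWord

abbrev GG := HNNExtension Hgrp Asub Bsub phi

/-- complexity of an element of the base group -/
noncomputable def cH (h : Hgrp) : ℕ∞ := sig h.b + sig ((h.a : ℤ) : ℚ)

lemma cH_mul_le (g h : Hgrp) : cH (g * h) ≤ cH g + cH h := by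
  unfold cH
  rw [mul_b, mul_a]
  have h1 : sig (g.b + 2 ^ g.a * h.b) ≤ sig g.b + sig h.b := by
    refine (sig_add_le _ _).trans ?_
    rw [sig_zpow_mul]
  have h2 : sig (((g.a + h.a : ℤ) : ℚ)) ≤ sig ((g.a : ℤ) : ℚ) + sig ((h.a : ℤ) : ℚ) := by
    push_cast
    exact sig_add_le _ _
  calc sig (g.b + 2 ^ g.a * h.b) + sig (((g.a + h.a : ℤ) : ℚ))
      ≤ (sig g.b + sig h.b) + (sig ((g.a:ℤ):ℚ) + sig ((h.a:ℤ):ℚ)) := add_le_add h1 h2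
    _ = _ := by ring

lemma cH_one : cH 1 = 0 := by
  unfold cH
  simp [sig_zero]

/-- complexity of a normal word -/
noncomputable def D (w : NormalWord dd) : ℕ∞ :=
  cH w.head + (w.toList.map fun p => cH p.2).sum

lemma D_group_smul (g : Hgrp) (w : NormalWord dd) :
    D (g • w) = cH (g * w.head) + (w.toList.map fun p => cH p.2).sum := rfl

lemma D_group_smul_le (g : Hgrp) (w : NormalWord dd) :
    D (g • w) ≤ cH g + D w := by
  rw [D_group_smul, D, ← add_assoc]
  exact add_le_add_left (cH_mul_le g w.head) _

lemma D_cons (g : Hgrp) (u : ℤˣ) (w : NormalWord dd) (h1 h2) :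
    D (HNNExtension.NormalWord.cons g u w h1 h2) =
      cH g + (cH w.head + (w.toList.map fun p => cH p.2).sum) := by
  unfold D
  simp [HNNExtension.NormalWord.cons]

/-- image under the subgroup isomorphism does not increase complexity -/
lemma cH_toSubgroupEquiv_le (u : ℤˣ) (x : HNNExtension.toSubgroup Asub Bsub u) :
    cH ((HNNExtension.toSubgroupEquiv phi u x : Hgrp)) ≤ cH (x : Hgrp) := by
  rcases Int.units_eq_one_or u with rfl | rfl
  · obtain ⟨hxa, k, hk⟩ := x.2
    show cH (⟨(x : Hgrp).b.num, 0⟩ : Hgrp) ≤ _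
    unfold cH
    simp only
    have hnum : (((x : Hgrp).b.num : ℤ) : ℚ) = (x : Hgrp).b := by
      rw [← hk, Rat.num_intCast]
    rw [hnum, sig_zero, hxa]
    push_cast
    rw [sig_zero]
    simp
  · show cH (⟨0, ((x : Hgrp).a : ℚ)⟩ : Hgrp) ≤ _
    unfold cH
    simp only
    have hxb : (x : Hgrp).b = 0 := x.2
    rw [hxb, sig_zero]
    push_cast
    rw [sig_zero]
    simp [add_comm]

lemma D_unitsSMul_le (u : ℤˣ) (w : NormalWord dd) :
    D (HNNExtension.NormalWord.unitsSMul phi u w) ≤ D w + 2 := by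
  rw [HNNExtension.NormalWord.unitsSMul]
  split_ifs with hcan
  · -- cancellation: complexity does not increase
    induction w using HNNExtension.NormalWord.consRecOn with
    | ofGroup g => simp [HNNExtension.NormalWord.Cancels, HNNExtension.NormalWord.ofGroup] at hcan
    | cons g u' w' h1 h2 _ =>
      simp only [HNNExtension.NormalWord.unitsSMulWithCancel,
        HNNExtension.NormalWord.consRecOn_cons]
      refine le_trans ?_ (le_add_right (le_refl (D (HNNExtension.NormalWord.cons g u' w' h1 h2))))
      rw [D_group_smul, D_cons]
      have hhd : cH ((HNNExtension.toSubgroupEquiv phi u ⟨g, hcan.1⟩ : Hgrp) * w'.head) ≤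
          cH g + cH w'.head := by
        refine (cH_mul_le _ _).trans (add_le_add_left ?_ _)
        exact cH_toSubgroupEquiv_le u ⟨g, hcan.1⟩
      calc cH ((HNNExtension.toSubgroupEquiv phi u ⟨g, hcan.1⟩ : Hgrp) * w'.head) +
            (w'.toList.map fun p => cH p.2).sum
          ≤ (cH g + cH w'.head) + (w'.toList.map fun p => cH p.2).sum :=
            add_le_add_left hhd _
        _ = cH g + (cH w'.head + (w'.toList.map fun p => cH p.2).sum) := by ring
  · -- no cancellation : cost at most 2
    rw [D_cons]
    have hhead : ((((HNNExtension.NormalWord.unitsSMulGroup phi dd u w.head).2 : Hgrp) *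
          w.head⁻¹) • w).head =
        ((HNNExtension.NormalWord.unitsSMulGroup phi dd u w.head).2 : Hgrp) := by
      simp
    rw [hhead]
    have hlist : ((((HNNExtension.NormalWord.unitsSMulGroup phi dd u w.head).2 : Hgrp) *
        w.head⁻¹) • w).toList = w.toList := rfl
    rw [hlist]
    rcases Int.units_eq_one_or u with rfl | rfl
    · -- u = 1 : splitting into floor and fractional part
      have hg := dd_equiv_one w.head
      rw [HNNExtension.NormalWord.unitsSMulGroup]
      rw [hg]
      simp only
      have hval : cH ((HNNExtension.toSubgroupEquiv phi 1
          ⟨⟨0, (⌊w.head.b⌋ : ℚ)⟩, ⟨rfl, ⟨⌊w.head.b⌋, rfl⟩⟩⟩ : Hgrp)) = sig ((⌊w.head.b⌋ : ℤ) : ℚ) := by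
        show cH (⟨((⌊w.head.b⌋ : ℚ)).num, 0⟩ : Hgrp) = _
        unfold cH
        simp only [Rat.num_intCast]
        rw [sig_zero]
        simp
      rw [hval]
      have hr : cH (⟨w.head.a, Int.fract w.head.b⟩ : Hgrp) =
          sig (Int.fract w.head.b) + sig ((w.head.a : ℤ) : ℚ) := rfl
      rw [hr]
      unfold D cH
      calc sig ((⌊w.head.b⌋:ℤ):ℚ) + (sig (Int.fract w.head.b) + sig ((w.head.a:ℤ):ℚ) +
            (w.toList.map fun p => cH p.2).sum)
          = (sig ((⌊w.head.b⌋:ℤ):ℚ) + sig (Int.fract w.head.b)) + sig ((w.head.a:ℤ):ℚ) +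
            (w.toList.map fun p => cH p.2).sum := by ring
        _ ≤ (sig w.head.b + 2) + sig ((w.head.a:ℤ):ℚ) + (w.toList.map fun p => cH p.2).sum := by
            exact add_le_add_left (add_le_add_left (sig_floor_add_sig_fract w.head.b) _) _
        _ = sig w.head.b + sig ((w.head.a:ℤ):ℚ) + (w.toList.map fun p => cH p.2).sum + 2 := by
            ring
    · -- u = -1 : free
      have hg := dd_equiv_neg_one w.head
      rw [HNNExtension.NormalWord.unitsSMulGroup]
      rw [hg]
      simp only
      have hval : cH ((HNNExtension.toSubgroupEquiv phi (-1)
          ⟨⟨w.head.a, 0⟩, rfl⟩ : Hgrp)) = sig ((w.head.a : ℤ) : ℚ) := by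
        show cH (⟨0, ((w.head.a : ℤ) : ℚ)⟩ : Hgrp) = _
        unfold cH
        simp only
        rw [show ((0:ℤ):ℚ) = (0:ℚ) by norm_num, sig_zero, add_zero]
      rw [hval]
      have hr : cH (⟨0, 2 ^ (-w.head.a) * w.head.b⟩ : Hgrp) = sig w.head.b := by
        unfold cH
        simp only
        rw [sig_zpow_mul]
        rw [show ((0:ℤ):ℚ) = (0:ℚ) by norm_num, sig_zero]
        simp
      rw [hr]
      unfold D cH
      calc sig ((w.head.a:ℤ):ℚ) + (sig w.head.b + (w.toList.map fun p => cH p.2).sum)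
          = sig w.head.b + sig ((w.head.a:ℤ):ℚ) + (w.toList.map fun p => cH p.2).sum := by ring
        _ ≤ _ := le_add_right (le_refl _)

end Hgrp

/-! ### Part 6: the Baumslag–Gersten group and the main theorem -/


namespace Hgrp

open HNNExtension HNNExtension.NormalWord

def s0H : Hgrp := ⟨0, 1⟩
def s1H : Hgrp := ⟨1, 0⟩

lemma s0H_mem_Asub : s0H ∈ Asub := ⟨rfl, 1, by show ((1:ℤ):ℚ) = (1:ℚ); norm_num⟩

noncomputable def img : Fin 3 → GG := ![HNNExtension.of s0H, HNNExtension.of s1H, HNNExtension.t]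

lemma img_rels : ∀ r ∈ bgRels, FreeGroup.lift img r = 1 := by
  intro r hr
  simp only [bgRels, Set.mem_insert_iff, Set.mem_singleton_iff] at hr
  rcases hr with rfl | rfl
  · simp only [map_mul, map_inv, map_pow, FreeGroup.lift_apply_of]
    rw [show img (0 : Fin 3) = HNNExtension.of s0H from rfl,
        show img (1 : Fin 3) = HNNExtension.of s1H from rfl,
        mul_inv_eq_one, ← map_pow, ← map_inv, ← map_mul, ← map_mul]
    have h : s1H * s0H * s1H⁻¹ = s0H ^ 2 := by
      refine Hgrp.ext ?_ ?_ <;> rw [pow_two] <;> simp [s0H, s1H] <;> norm_num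
    rw [h]
  · simp only [map_mul, map_inv, FreeGroup.lift_apply_of]
    rw [show img (0 : Fin 3) = HNNExtension.of s0H from rfl,
        show img (1 : Fin 3) = HNNExtension.of s1H from rfl,
        show img (2 : Fin 3) = HNNExtension.t from rfl,
        mul_inv_eq_one]
    have h := HNNExtension.equiv_eq_conj (φ := phi) ⟨s0H, s0H_mem_Asub⟩
    have h2 : ((phi ⟨s0H, s0H_mem_Asub⟩ : Bsub) : Hgrp) = s1H := by
      show (⟨(s0H.b).num, 0⟩ : Hgrp) = s1H
      refine Hgrp.ext ?_ rfl
      show ((1:ℚ)).num = (1:ℤ)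
      norm_num
    rw [h2] at h
    exact h.symm

/-- the homomorphism from the Baumslag–Gersten group to the HNN model -/
noncomputable def Phi : BG →* GG := PresentedGroup.toGroup img_rels

lemma Phi_bg (i : Fin 3) : Phi (bg i) = img i := PresentedGroup.toGroup.of img_rels

/-- the per-letter Lipschitz bound, for generators -/
lemma D_Phi_bg (i : Fin 3) (w : NormalWord dd) :
    D (Phi (bg i) • w) ≤ D w + 2 ∧ D ((Phi (bg i))⁻¹ • w) ≤ D w + 2 := by
  have key : ∀ g : Hgrp, cH g ≤ 2 →
      D ((HNNExtension.of (A := Asub) (B := Bsub) (φ := phi) g) • w) ≤ D w + 2 := by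
    intro g hg
    rw [HNNExtension.NormalWord.of_smul_eq_smul]
    refine (D_group_smul_le g w).trans ?_
    rw [add_comm (D w) 2]
    exact add_le_add_left hg _
  have hone : sig (1:ℚ) ≤ 1 := by
    calc sig (1:ℚ) = sig (((1:ℤ):ℚ)) := by norm_num
      _ ≤ ((1:ℤ).natAbs : ℕ∞) := sig_int_le 1
      _ ≤ 1 := by norm_num
  have hs0 : cH s0H ≤ 2 := by
    unfold cH s0H
    simp only
    rw [show ((0:ℤ):ℚ) = (0:ℚ) by norm_num, sig_zero, add_zero]
    exact hone.trans (by norm_num)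
  have hs0' : cH s0H⁻¹ ≤ 2 := by
    have h1 : s0H⁻¹ = ⟨0, -1⟩ := by
      refine Hgrp.ext ?_ ?_ <;> simp [s0H] <;> norm_num
    rw [h1]
    unfold cH
    simp only
    rw [show ((0:ℤ):ℚ) = (0:ℚ) by norm_num, sig_zero, add_zero,
      show (-1:ℚ) = -(((1:ℤ)):ℚ) by norm_num, sig_neg]
    exact (sig_int_le 1).trans (by norm_num)
  have hs1 : cH s1H ≤ 2 := by
    unfold cH s1H
    simp only
    rw [sig_zero, zero_add]
    exact le_trans (by push_cast; exact le_refl _) (hone.trans (by norm_num))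
  have hs1' : cH s1H⁻¹ ≤ 2 := by
    have h1 : s1H⁻¹ = ⟨-1, 0⟩ := by
      refine Hgrp.ext ?_ ?_ <;> simp [s1H]
    rw [h1]
    unfold cH
    simp only
    rw [sig_zero, zero_add,
      show (((-1:ℤ)):ℚ) = -(((1:ℤ)):ℚ) by push_cast; ring, sig_neg]
    exact (sig_int_le 1).trans (by norm_num)
  have htinv : (HNNExtension.t (G := Hgrp) (A := Asub) (B := Bsub) (φ := phi))⁻¹ • w =
      HNNExtension.NormalWord.unitsSMul phi (-1) w := by
    have h := HNNExtension.NormalWord.t_pow_smul_eq_unitsSMul (φ := phi) (-1) w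
    rw [show (((-1 : ℤˣ)) : ℤ) = (-1 : ℤ) by norm_num, zpow_neg_one] at h
    exact h
  fin_cases i <;> rw [Phi_bg] <;> constructor
  · exact key _ hs0
  · show D ((HNNExtension.of (A := Asub) (B := Bsub) (φ := phi) s0H)⁻¹ • w) ≤ D w + 2
    rw [← map_inv]
    exact key _ hs0'
  · exact key _ hs1
  · show D ((HNNExtension.of (A := Asub) (B := Bsub) (φ := phi) s1H)⁻¹ • w) ≤ D w + 2
    rw [← map_inv]
    exact key _ hs1'
  · show D ((HNNExtension.t (G := Hgrp) (A := Asub) (B := Bsub) (φ := phi)) • w) ≤ D w + 2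
    rw [HNNExtension.NormalWord.t_smul_eq_unitsSMul]
    exact D_unitsSMul_le 1 w
  · show D ((HNNExtension.t (G := Hgrp) (A := Asub) (B := Bsub) (φ := phi))⁻¹ • w) ≤ D w + 2
    rw [htinv]
    exact D_unitsSMul_le (-1) w

/-- the per-letter Lipschitz bound -/
lemma D_letter (p : Fin 3 × Bool) (w : NormalWord dd) :
    D ((Phi (if p.2 then bg p.1 else (bg p.1)⁻¹)) • w) ≤ D w + 2 := by
  obtain ⟨i, b⟩ := p
  cases b
  · rw [show (if (⟨i, false⟩ : Fin 3 × Bool).2 then bg i else (bg i)⁻¹) = (bg i)⁻¹ from rfl,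
      map_inv]
    exact (D_Phi_bg i w).2
  · rw [show (if (⟨i, true⟩ : Fin 3 × Bool).2 then bg i else (bg i)⁻¹) = bg i from rfl]
    exact (D_Phi_bg i w).1

/-- main word induction -/
lemma D_eval (w : List (Fin 3 × Bool)) :
    D ((Phi (evalWordG w)) • HNNExtension.NormalWord.empty) ≤ ((2 * w.length : ℕ) : ℕ∞) := by
  induction w with
  | nil =>
    rw [show evalWordG [] = 1 from rfl, map_one, one_smul]
    rw [show D HNNExtension.NormalWord.empty = cH 1 + 0 from rfl, cH_one]
    simp
  | cons p w ih =>
    have hsplit : evalWordG (p :: w) = (if p.2 then bg p.1 else (bg p.1)⁻¹) * evalWordG w := by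
      unfold evalWordG
      rw [List.map_cons, List.prod_cons]
    rw [hsplit, map_mul, mul_smul]
    refine (D_letter p _).trans ?_
    calc D (Phi (evalWordG w) • HNNExtension.NormalWord.empty) + 2
        ≤ ((2 * w.length : ℕ) : ℕ∞) + 2 := add_le_add_left ih _
      _ = ((2 * (p :: w).length : ℕ) : ℕ∞) := by
          rw [List.length_cons]
          push_cast
          ring

/-! ### powers of the generators in `Hgrp` -/

lemma s0H_pow (k : ℕ) : s0H ^ k = ⟨0, (k : ℚ)⟩ := by
  induction k with
  | zero => simp [s0H]; rfl
  | succ k ih =>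
    rw [pow_succ, ih]
    refine Hgrp.ext ?_ ?_
    · show (0:ℤ) + 0 = 0; ring
    · show (k:ℚ) + 2 ^ (0:ℤ) * s0H.b = ((k+1 : ℕ) : ℚ)
      show (k:ℚ) + 2 ^ (0:ℤ) * 1 = ((k+1 : ℕ) : ℚ)
      push_cast
      norm_num

lemma s0H_zpow (k : ℤ) : s0H ^ k = ⟨0, (k : ℚ)⟩ := by
  rcases k with k | k
  · rw [Int.ofNat_eq_coe, zpow_natCast, s0H_pow]
    norm_num
  · rw [zpow_negSucc, s0H_pow]
    refine Hgrp.ext ?_ ?_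
    · show -(0:ℤ) = (0:ℤ); ring
    · show -(2 ^ (-(0:ℤ)) * (((k+1:ℕ):ℚ))) = ((Int.negSucc k : ℤ) : ℚ)
      rw [Int.negSucc_eq]
      push_cast
      norm_num

lemma s1H_pow (k : ℕ) : s1H ^ k = ⟨k, 0⟩ := by
  induction k with
  | zero => simp [s1H]; rfl
  | succ k ih =>
    rw [pow_succ, ih]
    refine Hgrp.ext ?_ ?_
    · show (k:ℤ) + 1 = ((k+1:ℕ):ℤ); push_cast; ring
    · show (0:ℚ) + 2 ^ (k:ℤ) * s1H.b = 0
      show (0:ℚ) + 2 ^ (k:ℤ) * 0 = 0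
      ring

lemma s1H_zpow (k : ℤ) : s1H ^ k = ⟨k, 0⟩ := by
  rcases k with k | k
  · rw [Int.ofNat_eq_coe, zpow_natCast, s1H_pow]
  · rw [zpow_negSucc, s1H_pow]
    refine Hgrp.ext ?_ ?_
    · show -((k+1:ℕ):ℤ) = Int.negSucc k
      rw [Int.negSucc_eq]
      push_cast
      ring
    · show -(2 ^ (-((k+1:ℕ):ℤ)) * (⟨((k+1:ℕ):ℤ), 0⟩ : Hgrp).b) = 0
      show -(2 ^ (-((k+1:ℕ):ℤ)) * (0:ℚ)) = 0
      ring

end Hgrp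

/-! ### words representing given elements -/

lemma evalWordG_append (w₁ w₂ : List (Fin 3 × Bool)) :
    evalWordG (w₁ ++ w₂) = evalWordG w₁ * evalWordG w₂ := by
  unfold evalWordG
  rw [List.map_append, List.prod_append]

lemma evalWordG_replicate (k : ℕ) (i : Fin 3) (b : Bool) :
    evalWordG (List.replicate k (i, b)) = (if b then bg i else (bg i)⁻¹) ^ k := by
  induction k with
  | zero => simp [evalWordG]
  | succ k ih =>
    rw [List.replicate_succ]
    unfold evalWordG at *
    rw [List.map_cons, List.prod_cons, ih, pow_succ']

lemma exists_word_zpow (i : Fin 3) (k : ℤ) :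
    ∃ w : List (Fin 3 × Bool), evalWordG w = bg i ^ k := by
  rcases le_or_gt 0 k with hk | hk
  · refine ⟨List.replicate k.toNat (i, true), ?_⟩
    rw [evalWordG_replicate]
    show (bg i) ^ k.toNat = _
    rw [← zpow_natCast, Int.toNat_of_nonneg hk]
  · refine ⟨List.replicate k.natAbs (i, false), ?_⟩
    rw [evalWordG_replicate]
    show ((bg i)⁻¹) ^ k.natAbs = _
    rw [inv_pow, ← zpow_natCast, ← zpow_neg]
    congr 1
    omega

/-! ### arithmetic facts about `E` and `Mseq` -/

lemma E_pos (m n : ℕ) (hn : 1 ≤ n) : 1 ≤ E m n := by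
  induction m with
  | zero => exact hn
  | succ m _ => exact Nat.one_le_two_pow

lemma Mseq_eq (j : ℕ) : 3 * Mseq j = 4 ^ j - 1 := by
  induction j with
  | zero => simp [Mseq]
  | succ j ih =>
    show 3 * (4 * Mseq j + 1) = 4 ^ (j+1) - 1
    rw [pow_succ]
    have h4 : (1:ℤ) ≤ 4 ^ j := one_le_pow₀ (by norm_num)
    nlinarith [ih]

/-- For `m ≥ 2`, `n ≥ 1`, `α ≤ 0` and `β = 2^{-α}·(E(m,n)-1)/3`, we have
`|s₁^α s₀^β|_G ≥ (E(m-1,n)-1)/4` in the Baumslag–Gersten group. -/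
theorem s1s0_length_lower_bound_gersten (m n : ℕ) (hm : 2 ≤ m) (hn : 1 ≤ n) (α β : ℤ)
    (hα : α ≤ 0) (hβ : 3 * β = 2 ^ (-α).toNat * ((E m n : ℤ) - 1)) :
    (E (m - 1) n : ℤ) - 1 ≤ 4 * wlG (bg 1 ^ α * bg 0 ^ β) := by
  classical
  open Hgrp HNNExtension HNNExtension.NormalWord in
  -- set up the tower arithmetic
  have hE2 : 1 ≤ E (m - 2) n := E_pos _ _ hn
  set j : ℕ := 2 ^ (E (m - 2) n - 1) with hj
  have hK : E (m - 1) n = 2 * j := by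
    have h1 : m - 1 = (m - 2) + 1 := by omega
    rw [h1]
    show 2 ^ (E (m-2) n) = 2 * j
    rw [hj, ← pow_succ']
    congr 1
    omega
  have hMj : ((E m n : ℤ) - 1) = 3 * Mseq j := by
    have h1 : m = (m - 1) + 1 := by omega
    have h2 : E m n = 2 ^ (E (m-1) n) := by
      conv_lhs => rw [h1]
      rfl
    rw [h2, hK, Mseq_eq]
    push_cast
    rw [pow_mul]
    norm_num
  have hβ2 : β = 2 ^ (-α).toNat * Mseq j := by
    have h3 : (3:ℤ) * β = 3 * (2 ^ (-α).toNat * Mseq j) := by rw [hβ, hMj]; ring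
    exact mul_left_cancel₀ (by norm_num) h3
  -- the image of the element in the HNN model
  have hg : Hgrp.Phi (bg 1 ^ α * bg 0 ^ β) =
      HNNExtension.of (A := Hgrp.Asub) (B := Hgrp.Bsub) (φ := Hgrp.phi)
        (⟨α, (Mseq j : ℚ)⟩ : Hgrp) := by
    rw [map_mul, map_zpow, map_zpow, Hgrp.Phi_bg, Hgrp.Phi_bg,
      show Hgrp.img 1 = HNNExtension.of Hgrp.s1H from rfl,
      show Hgrp.img 0 = HNNExtension.of Hgrp.s0H from rfl,
      ← map_zpow, ← map_zpow, ← map_mul, Hgrp.s1H_zpow, Hgrp.s0H_zpow]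
    congr 1
    refine Hgrp.ext ?_ ?_
    · show α + 0 = α; ring
    · show (0:ℚ) + 2 ^ α * ((β:ℤ):ℚ) = ((Mseq j : ℤ) : ℚ)
      rw [hβ2]
      push_cast
      rw [zero_add, ← mul_assoc]
      have hα2 : (((-α).toNat : ℕ) : ℤ) = -α := by omega
      rw [show ((2:ℚ) ^ ((-α).toNat : ℕ)) = (2:ℚ) ^ ((((-α).toNat : ℕ) : ℤ)) by
          rw [zpow_natCast], hα2,
        ← zpow_add₀ (by norm_num : (2:ℚ) ≠ 0)]
      simp
  -- the minimal-length word
  have hne : {n' | ∃ w : List (Fin 3 × Bool), w.length = n' ∧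
      evalWordG w = bg 1 ^ α * bg 0 ^ β}.Nonempty := by
    obtain ⟨w₁, hw₁⟩ := exists_word_zpow 1 α
    obtain ⟨w₂, hw₂⟩ := exists_word_zpow 0 β
    exact ⟨(w₁ ++ w₂).length, w₁ ++ w₂, rfl, by rw [evalWordG_append, hw₁, hw₂]⟩
  obtain ⟨w₀, hw₀l, hw₀e⟩ := Nat.sInf_mem hne
  have hD := Hgrp.D_eval w₀
  rw [hw₀e, hg] at hD
  -- compute the complexity of the target
  have hDval : Hgrp.D ((HNNExtension.of (A := Hgrp.Asub) (B := Hgrp.Bsub) (φ := Hgrp.phi)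
      (⟨α, (Mseq j : ℚ)⟩ : Hgrp)) • HNNExtension.NormalWord.empty) =
      Hgrp.cH (⟨α, (Mseq j : ℚ)⟩ : Hgrp) := by
    rw [HNNExtension.NormalWord.of_smul_eq_smul]
    show Hgrp.cH ((⟨α, (Mseq j : ℚ)⟩ : Hgrp) * 1) + 0 = _
    rw [mul_one, add_zero]
  rw [hDval] at hD
  have hsig : sig ((Mseq j : ℤ) : ℚ) ≤ ((2 * w₀.length : ℕ) : ℕ∞) := by
    refine le_trans ?_ hD
    unfold Hgrp.cH
    exact le_self_add
  have hjle : j ≤ 2 * w₀.length := (sig_Mseq_lower j).1 _ hsig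
  have hfin : E (m-1) n ≤ 4 * w₀.length := by omega
  have hwl : w₀.length = wlG (bg 1 ^ α * bg 0 ^ β) := hw₀l
  rw [hwl] at hfin
  have : (E (m-1) n : ℤ) ≤ 4 * (wlG (bg 1 ^ α * bg 0 ^ β) : ℤ) := by exact_mod_cast hfin
  omega
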